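/- Let 4 ≤ p ≤ 6, 0 < δ₁ ≤ 1/2 + 3/p and 0 < δ₂ ≤ 1. Let τ be a sequence in T(δ₁, δ₂) and define the sequence γ by γ_n = min(n − 1/2 + 3/p, τ_n) for all n ≥ 0. Then γ is a sequence in T(δ₁, δ₂) and E_p(τ) ≤ E_p(γ). -/

import Mathlib

open MeasureTheory Real Set

/-- The kernel `K_p(τ; x)`. -/
noncomputable def Kp (p : ℝ) (τ : ℕ → ℝ) (x : ℝ) : ℝ :=
  ∑' n : ℕ, (Set.Ioo (τ n) (τ (n + 1))).indicator
    (fun y => Real.sin (p / 2 * π * (y - n)) / (π * y)) x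

/-- The quantity `E_p(τ)`. -/
noncomputable def Ep (p : ℝ) (τ : ℕ → ℝ) : ℝ :=
  ∫ x in Set.Ioi (0 : ℝ), (max 0 (Kp p τ x)) ^ 2

/-- The set of sequences `T(δ₁, δ₂)`. -/
def Tset (δ₁ δ₂ : ℝ) : Set (ℕ → ℝ) :=
  {τ | τ 0 = 0 ∧ StrictMono τ ∧ δ₁ ≤ τ 1 ∧ ∀ n, 1 ≤ n → δ₂ ≤ τ (n + 1) - τ n}

/-- The supremum `ℰ_p(δ₁, δ₂) = sup_{τ ∈ T(δ₁,δ₂)} E_p(τ)`. -/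
noncomputable def Esup (p δ₁ δ₂ : ℝ) : ℝ := sSup (Ep p '' Tset δ₁ δ₂)

noncomputable def psi (t : ℝ) : ℝ := (max 0 (Real.sin t)) ^ 2

lemma psi_nonneg (t : ℝ) : 0 ≤ psi t := sq_nonneg _

lemma psi_cont : Continuous psi := (continuous_const.max Real.continuous_sin).pow 2

lemma psi_per : Function.Periodic psi (2 * π) := fun x => by
  simp [psi, Real.sin_add_two_pi]

lemma psi_refl (t : ℝ) : psi (π - t) = psi t := by simp [psi, Real.sin_pi_sub]

lemma W1 {m s : ℝ} (hm0 : 0 ≤ m) (hm : m ≤ π / 2) (hs0 : 0 ≤ s) (hs : s ≤ π) :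
    psi (m - s) ≤ psi (m + s) := by
  have hπ := Real.pi_pos
  rcases le_or_gt (Real.sin (m - s)) 0 with h | h
  · have h0 : psi (m - s) = 0 := by simp [psi, max_eq_left h]
    rw [h0]; exact psi_nonneg _
  · have hsm : s < m := by
      by_contra hc
      push_neg at hc
      have : Real.sin (m - s) ≤ 0 :=
        Real.sin_nonpos_of_nonpos_of_neg_pi_le (by linarith) (by linarith)
      linarith
    have hcos : 0 ≤ Real.cos m := Real.cos_nonneg_of_mem_Icc ⟨by linarith, hm⟩
    have hsin : 0 ≤ Real.sin s := Real.sin_nonneg_of_nonneg_of_le_pi hs0 hs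
    have hle : Real.sin (m - s) ≤ Real.sin (m + s) := by
      rw [Real.sin_add, Real.sin_sub]; nlinarith
    have h2 : 0 ≤ Real.sin (m - s) := h.le
    simp only [psi, max_eq_right h2, max_eq_right (h2.trans hle)]
    exact pow_le_pow_left₀ h2 hle 2

lemma I_nonneg {m : ℝ} (hm0 : 0 ≤ m) (hm : m ≤ π / 2) :
    ∀ S, 0 ≤ S → S ≤ 2 * π → 0 ≤ ∫ s in (0:ℝ)..S, (psi (m + s) - psi (m - s)) := by
  have hπ := Real.pi_pos
  have hcont : Continuous fun s => psi (m + s) - psi (m - s) :=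
    (psi_cont.comp (continuous_const.add continuous_id)).sub
      (psi_cont.comp (continuous_const.sub continuous_id))
  intro S hS0 hS2
  rcases le_or_gt S π with hcase | hcase
  · apply intervalIntegral.integral_nonneg hS0
    intro s hs
    have := W1 hm0 hm hs.1 (hs.2.trans hcase)
    linarith
  · have h1 : IntervalIntegrable (fun s => psi (m + s) - psi (m - s)) volume 0 (2*π - S) :=
      hcont.intervalIntegrable _ _
    have h2 : IntervalIntegrable (fun s => psi (m + s) - psi (m - s)) volume (2*π - S) S :=
      hcont.intervalIntegrable _ _
    have hsplit := intervalIntegral.integral_add_adjacent_intervals h1 h2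
    have hzero : ∫ s in (2*π - S)..S, (psi (m + s) - psi (m - s)) = 0 := by
      have hre : ∀ s : ℝ, psi (m + (2*π - s)) - psi (m - (2*π - s)) = -(psi (m + s) - psi (m - s)) := by
        intro s
        have e1 : psi (m + (2*π - s)) = psi (m - s) := by
          have := psi_per (m - s)
          rw [← this]; ring_nf
        have e2 : psi (m - (2*π - s)) = psi (m + s) := by
          have := psi_per (m - (2*π - s))
          rw [show m - (2*π - s) + 2*π = m + s by ring] at this
          exact this.symm
        rw [e1, e2]; ring
      have hc := intervalIntegral.integral_comp_sub_left (a := 2*π - S) (b := S)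
          (fun s => psi (m + s) - psi (m - s)) (2*π)
      rw [show 2*π - (2*π - S) = S by ring] at hc
      have hcongr : (∫ x in (2*π - S)..S, (fun s => psi (m + s) - psi (m - s)) (2*π - x))
          = ∫ x in (2*π - S)..S, -(psi (m + x) - psi (m - x)) := by
        apply intervalIntegral.integral_congr
        intro x _
        simp only
        exact hre x
      rw [intervalIntegral.integral_neg] at hcongr
      have := hcongr.symm.trans hc
      linarith
    have hfirst : 0 ≤ ∫ s in (0:ℝ)..(2*π - S), (psi (m + s) - psi (m - s)) := by
      apply intervalIntegral.integral_nonneg (by linarith)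
      intro s hs
      have := W1 hm0 hm hs.1 (by linarith [hs.2])
      linarith
    linarith

lemma window {L : ℝ} (hL0 : 0 ≤ L) (hL : L ≤ π) (Y : ℝ) :
    ∫ t in Y..(Y + L), psi t ≤ ∫ t in ((π - L)/2)..((π - L)/2 + L), psi t := by
  have hπ := Real.pi_pos
  have hint : ∀ u v : ℝ, IntervalIntegrable psi volume u v :=
    fun u v => psi_cont.intervalIntegrable u v
  set m := (π - L) / 2 with hmdef
  have hm0 : 0 ≤ m := by rw [hmdef]; linarith
  have hm2 : m ≤ π / 2 := by rw [hmdef]; linarith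
  set k : ℤ := ⌈(Y - m) / (2*π)⌉ with hkdef
  set Y' : ℝ := Y - 2*π*k with hY'def
  have h2π : (0:ℝ) < 2*π := by linarith
  have hY1 : Y' ≤ m := by
    have h := Int.le_ceil ((Y - m)/(2*π))
    rw [div_le_iff₀ h2π] at h
    rw [hY'def]; push_cast at h ⊢; linarith
  have hY2 : m - 2*π ≤ Y' := by
    have h := Int.ceil_lt_add_one ((Y - m)/(2*π))
    have h' : ((k:ℝ)) < (Y - m)/(2*π) + 1 := by exact_mod_cast h
    rw [div_add' _ _ _ h2π.ne', lt_div_iff₀ h2π] at h'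
    rw [hY'def]; nlinarith
  have hshift : ∫ t in Y..(Y + L), psi t = ∫ t in Y'..(Y' + L), psi t := by
    have hps : ∀ x : ℝ, psi (x + 2*π*k) = psi x := by
      intro x
      have h := (psi_per.int_mul k) x
      rw [show (k:ℝ) * (2*π) = 2*π*k by ring] at h
      exact h
    have hcomp := intervalIntegral.integral_comp_add_right (a := Y') (b := Y' + L) psi (2*π*k)
    rw [show Y' + 2*π*(k:ℝ) = Y by rw [hY'def]; ring,
        show Y' + L + 2*π*(k:ℝ) = Y + L by rw [hY'def]; ring] at hcomp
    rw [← hcomp]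
    apply intervalIntegral.integral_congr
    intro x _
    exact hps x
  rw [hshift]
  have hD : (∫ t in m..(m+L), psi t) - ∫ t in Y'..(Y'+L), psi t
      = ∫ s in (0:ℝ)..(m - Y'), (psi (m + s) - psi (m - s)) := by
    have h1 := intervalIntegral.integral_comp_add_right (a := Y') (b := m) psi L
    have c1 := intervalIntegral.integral_add_adjacent_intervals (hint Y' (Y'+L)) (hint (Y'+L) (m+L))
    have c2 := intervalIntegral.integral_add_adjacent_intervals (hint Y' m) (hint m (m+L))
    have h2 : (∫ t in Y'..m, (psi (t + L) - psi t))
        = (∫ t in Y'..m, psi (t + L)) - ∫ t in Y'..m, psi t :=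
      intervalIntegral.integral_sub
        ((psi_cont.comp (continuous_id.add continuous_const)).intervalIntegrable _ _)
        (hint _ _)
    have h3 := intervalIntegral.integral_comp_sub_left (a := (0:ℝ)) (b := m - Y')
        (fun t => psi (t + L) - psi t) m
    rw [show m - (m - Y') = Y' by ring, sub_zero] at h3
    have h4 : (∫ s in (0:ℝ)..(m - Y'), (fun t => psi (t + L) - psi t) (m - s))
        = ∫ s in (0:ℝ)..(m - Y'), (psi (m + s) - psi (m - s)) := by
      apply intervalIntegral.integral_congr
      intro s _
      simp only
      rw [show m - s + L = π - (m + s) by rw [hmdef]; ring, psi_refl]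
    rw [h4] at h3
    linarith
  have hI := I_nonneg hm0 hm2 (m - Y') (by linarith) (by linarith)
  linarith

lemma window' {a : ℝ} (ha1 : 2*π ≤ a) (ha2 : a ≤ 3*π) (Y : ℝ) :
    ∫ t in Y..(Y + a), psi t ≤ ∫ t in (3*π/2 - a/2)..(3*π/2 - a/2 + a), psi t := by
  have hπ := Real.pi_pos
  have hint : ∀ u v : ℝ, IntervalIntegrable psi volume u v :=
    fun u v => psi_cont.intervalIntegrable u v
  have hL0 : 0 ≤ a - 2*π := by linarith
  have hL : a - 2*π ≤ π := by linarith
  have key : ∀ Z : ℝ, ∫ t in Z..(Z + a), psi t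
      = (∫ t in Z..(Z + (a - 2*π)), psi t) + ∫ t in (0:ℝ)..(0 + 2*π), psi t := by
    intro Z
    have c1 := intervalIntegral.integral_add_adjacent_intervals
      (hint Z (Z + (a - 2*π))) (hint (Z + (a - 2*π)) (Z + a))
    have hp := psi_per.intervalIntegral_add_eq (Z + (a - 2*π)) 0
    rw [show Z + (a - 2*π) + 2*π = Z + a by ring] at hp
    linarith
  rw [key Y, key (3*π/2 - a/2)]
  have hw := window hL0 hL Y
  rw [show (π - (a - 2*π))/2 = 3*π/2 - a/2 by ring] at hw
  linarith

lemma A1theta {a : ℝ} (ha1 : 2*π ≤ a) (ha2 : a ≤ 3*π) (Y : ℝ) :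
    0 ≤ ∫ t in (3*π/2 - a/2)..Y, (psi t - psi (t + a)) := by
  have hint : ∀ u v : ℝ, IntervalIntegrable psi volume u v :=
    fun u v => psi_cont.intervalIntegrable u v
  have hint' : ∀ u v : ℝ, IntervalIntegrable (fun t => psi (t + a)) volume u v :=
    fun u v => (psi_cont.comp (continuous_id.add continuous_const)).intervalIntegrable u v
  have hsub : (∫ t in (3*π/2 - a/2)..Y, (psi t - psi (t + a)))
      = (∫ t in (3*π/2 - a/2)..Y, psi t) - ∫ t in (3*π/2 - a/2)..Y, psi (t + a) :=
    intervalIntegral.integral_sub (hint _ _) (hint' _ _)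
  have hcomp := intervalIntegral.integral_comp_add_right (a := 3*π/2 - a/2) (b := Y) psi a
  have c1 := intervalIntegral.integral_add_adjacent_intervals
    (hint (3*π/2 - a/2) Y) (hint Y (Y + a))
  have c2 := intervalIntegral.integral_add_adjacent_intervals
    (hint (3*π/2 - a/2) (3*π/2 - a/2 + a)) (hint (3*π/2 - a/2 + a) (Y + a))
  have hw := window' ha1 ha2 Y
  rw [hsub, hcomp]
  linarith

lemma A1x {p : ℝ} (hp4 : 4 ≤ p) (hp6 : p ≤ 6) (b : ℝ) (T : ℝ) :
    0 ≤ ∫ x in (b - 1/2 + 3/p)..T, (psi (p/2*π*(x - b)) - psi (p/2*π*(x - b) + p/2*π)) := by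
  have hπ := Real.pi_pos
  have hp0 : 0 < p := by linarith
  have ha0 : p/2*π ≠ 0 := by positivity
  have ha1 : 2*π ≤ p/2*π := by nlinarith
  have ha2 : p/2*π ≤ 3*π := by nlinarith
  have key := intervalIntegral.integral_comp_mul_add (a := b - 1/2 + 3/p) (b := T)
      (f := fun t => psi t - psi (t + p/2*π)) ha0 (-(p/2*π*b))
  have hbnd : p/2*π * (b - 1/2 + 3/p) + -(p/2*π*b) = 3*π/2 - (p/2*π)/2 := by
    field_simp
    ring
  rw [hbnd] at key
  have hg : (∫ x in (b - 1/2 + 3/p)..T, (psi (p/2*π*(x - b)) - psi (p/2*π*(x - b) + p/2*π)))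
      = (p/2*π)⁻¹ • ∫ t in (3*π/2 - (p/2*π)/2)..(p/2*π*T + -(p/2*π*b)),
          (psi t - psi (t + p/2*π)) := by
    rw [← key]
    apply intervalIntegral.integral_congr
    intro x _
    simp only
    rw [show p/2*π * x + -(p/2*π*b) = p/2*π*(x - b) by ring]
  rw [hg]
  have hI := A1theta ha1 ha2 (p/2*π*T + -(p/2*π*b))
  have : (0:ℝ) ≤ (p/2*π)⁻¹ := by positivity
  rw [smul_eq_mul]
  exact mul_nonneg this hI

lemma A2 {c T : ℝ} (hc : 1 ≤ c) (hcT : c ≤ T) {φ : ℝ → ℝ} (hφ : Continuous φ)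
    (hpos : ∀ Y, 0 ≤ ∫ x in c..Y, φ x) :
    0 ≤ ∫ x in c..T, φ x / x^2 := by
  have hderiv : ∀ y ∈ Set.uIcc c T, HasDerivAt (fun u => ∫ x in c..u, φ x) (φ y) y :=
    fun y _ => (hφ.integral_hasStrictDerivAt c y).hasDerivAt
  have hw : ∀ y ∈ Set.uIcc c T, HasDerivAt (fun x : ℝ => (x^2)⁻¹) (-(2*y)/((y^2)^2)) y := by
    intro y hy
    rw [Set.uIcc_of_le hcT] at hy
    have hy0 : y ≠ 0 := by
      have : (0:ℝ) < y := by linarith [hy.1]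
      exact this.ne'
    have h1 : HasDerivAt (fun x : ℝ => x^2) (2*y) y := by
      simpa [mul_comm] using hasDerivAt_pow 2 y
    exact h1.inv (pow_ne_zero 2 hy0)
  have hu' : IntervalIntegrable φ volume c T := hφ.intervalIntegrable _ _
  have hv' : IntervalIntegrable (fun y : ℝ => -(2*y)/((y^2)^2)) volume c T := by
    apply ContinuousOn.intervalIntegrable
    apply ContinuousOn.div
    · fun_prop
    · fun_prop
    · intro y hy
      rw [Set.uIcc_of_le hcT] at hy
      have : (0:ℝ) < y := by linarith [hy.1]
      positivity
  have hparts := intervalIntegral.integral_mul_deriv_eq_deriv_mul hderiv hw hu' hv'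
  have hΦc : (∫ x in c..c, φ x) = 0 := intervalIntegral.integral_same
  have hneg : (∫ x in c..T, (∫ t in c..x, φ t) * (-(2*x)/((x^2)^2))) ≤ 0 := by
    rw [← neg_nonneg, ← intervalIntegral.integral_neg]
    apply intervalIntegral.integral_nonneg hcT
    intro x hx
    have hx1 : (1:ℝ) ≤ x := le_trans hc hx.1
    have hx0 : (0:ℝ) < x := by linarith
    have hΦx : 0 ≤ ∫ t in c..x, φ t := hpos x
    rw [show -((∫ t in c..x, φ t) * (-(2*x)/((x^2)^2)))
        = (∫ t in c..x, φ t) * ((2*x)/((x^2)^2)) by ring]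
    apply mul_nonneg hΦx
    positivity
  have hgoal : (∫ x in c..T, φ x / x^2) = ∫ x in c..T, φ x * (x^2)⁻¹ := by
    apply intervalIntegral.integral_congr
    intro x _
    simp only [div_eq_mul_inv]
  rw [hgoal]
  have hT0 : (0:ℝ) < T := by linarith
  have hTpos : 0 ≤ (∫ x in c..T, φ x) * ((T^2)⁻¹) := mul_nonneg (hpos T) (by positivity)
  rw [hΦc] at hparts
  simp only [zero_mul, sub_zero] at hparts
  linarith

noncomputable def gS (p : ℝ) (n : ℕ) (x : ℝ) : ℝ :=
  (max 0 (Real.sin (p / 2 * π * (x - n)) / (π * x))) ^ 2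

lemma gS_nonneg (p : ℝ) (n : ℕ) (x : ℝ) : 0 ≤ gS p n x := sq_nonneg _

lemma gS_meas (p : ℝ) (n : ℕ) : Measurable (gS p n) := by
  unfold gS
  fun_prop

lemma gS_le (p : ℝ) (n : ℕ) {x : ℝ} (hx : 0 < x) : gS p n x ≤ (1/(π*x))^2 := by
  have hπ := Real.pi_pos
  have hπx : 0 < π * x := by positivity
  have h1 : max 0 (Real.sin (p / 2 * π * (x - n)) / (π * x)) ≤ 1/(π*x) := by
    apply max_le (by positivity)
    exact (div_le_div_iff_of_pos_right hπx).mpr (Real.sin_le_one _)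
  exact pow_le_pow_left₀ (le_max_left _ _) h1 2

lemma gS_eq {p : ℝ} (n : ℕ) {x : ℝ} (hx : 0 < x) :
    gS p n x = psi (p/2*π*(x - n)) / (π*x)^2 := by
  have hπ := Real.pi_pos
  have hπx : 0 < π * x := by positivity
  unfold gS psi
  rw [← div_pow, ← max_div_div_right hπx.le, zero_div]

lemma lemA {p : ℝ} (hp4 : 4 ≤ p) (hp6 : p ≤ 6) (k : ℕ) (T : ℝ) :
    0 ≤ ∫ x in Ioo ((↑(k+1):ℝ) - 1/2 + 3/p) T, (gS p (k+1) x - gS p k x) := by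
  have hπ := Real.pi_pos
  have hp0 : 0 < p := by linarith
  have h3p : 1/2 ≤ 3/p := by rw [le_div_iff₀ hp0]; linarith
  have hc1 : (1:ℝ) ≤ (↑(k+1):ℝ) - 1/2 + 3/p := by
    push_cast
    have : (0:ℝ) ≤ (k:ℝ) := Nat.cast_nonneg k
    linarith
  rcases le_or_gt T ((↑(k+1):ℝ) - 1/2 + 3/p) with hTc | hcT
  · rw [Set.Ioo_eq_empty (by exact fun h => absurd hTc (not_le.mpr h))]
    simp
  · have heq : (∫ x in Ioo ((↑(k+1):ℝ) - 1/2 + 3/p) T, (gS p (k+1) x - gS p k x))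
        = ∫ x in ((↑(k+1):ℝ) - 1/2 + 3/p)..T, (gS p (k+1) x - gS p k x) := by
      rw [intervalIntegral.integral_of_le hcT.le, integral_Ioc_eq_integral_Ioo]
    rw [heq]
    have hptw : Set.EqOn (fun x => gS p (k+1) x - gS p k x)
        (fun x => (1/π^2) * ((psi (p/2*π*(x - ((k:ℝ)+1))) - psi (p/2*π*(x - ((k:ℝ)+1)) + p/2*π)) / x^2))
        (Set.uIcc ((↑(k+1):ℝ) - 1/2 + 3/p) T) := by
      intro x hx
      rw [Set.uIcc_of_le hcT.le] at hx
      have hx0 : (0:ℝ) < x := by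
        have := hx.1; linarith
      have hπ0 : (π:ℝ) ≠ 0 := hπ.ne'
      simp only
      rw [gS_eq (k+1) hx0, gS_eq k hx0]
      rw [show p/2*π*(x - ((k:ℝ)+1)) + p/2*π = p / 2 * π * (x - (k:ℝ)) by ring]
      rw [show ((↑(k+1):ℕ):ℝ) = (k:ℝ)+1 by push_cast; ring]
      rw [div_sub_div_same]
      rw [show (π*x)^2 = π^2 * x^2 by ring]
      field_simp
    rw [intervalIntegral.integral_congr hptw]
    rw [intervalIntegral.integral_const_mul]
    apply mul_nonneg (by positivity)
    apply A2 hc1 hcT.le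
    · have h1 : Continuous fun x : ℝ => p/2*π*(x - ((k:ℝ)+1)) := by fun_prop
      exact (psi_cont.comp h1).sub (psi_cont.comp (by fun_prop))
    · intro Y
      have := A1x hp4 hp6 ((k:ℝ)+1) Y
      rw [show (k:ℝ)+1 - 1/2 + 3/p = (↑(k+1):ℝ) - 1/2 + 3/p by push_cast; ring] at this
      exact this

lemma Ioo_disj {σ : ℕ → ℝ} (hmono : StrictMono σ) {x : ℝ} {n m : ℕ}
    (hx : x ∈ Ioo (σ n) (σ (n+1))) (hne : m ≠ n) : x ∉ Ioo (σ m) (σ (m+1)) := by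
  intro hxm
  rcases lt_or_gt_of_ne hne with h | h
  · have h1 : σ (m+1) ≤ σ n := hmono.monotone h
    have := hx.1
    have := hxm.2
    linarith
  · have h1 : σ (n+1) ≤ σ m := hmono.monotone h
    have := hx.2
    have := hxm.1
    linarith

lemma Kp_eval {p : ℝ} {σ : ℕ → ℝ} (hmono : StrictMono σ) {x : ℝ} {n : ℕ}
    (hx : x ∈ Ioo (σ n) (σ (n+1))) :
    Kp p σ x = Real.sin (p / 2 * π * (x - n)) / (π * x) := by
  unfold Kp
  rw [tsum_eq_single n (fun m hmn => Set.indicator_of_notMem (Ioo_disj hmono hx hmn) _)]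
  exact Set.indicator_of_mem hx _

lemma Kp_zero {p : ℝ} {σ : ℕ → ℝ} {x : ℝ} (h : ∀ n, x ∉ Ioo (σ n) (σ (n+1))) :
    Kp p σ x = 0 := by
  unfold Kp
  rw [tsum_eq_single 0 (fun m _ => Set.indicator_of_notMem (h m) _)]
  exact Set.indicator_of_notMem (h 0) _

lemma Kp_cases {p : ℝ} {σ : ℕ → ℝ} (hmono : StrictMono σ) (x : ℝ) :
    Kp p σ x = 0 ∨ ∃ n, x ∈ Ioo (σ n) (σ (n+1)) ∧
      Kp p σ x = Real.sin (p / 2 * π * (x - n)) / (π * x) := by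
  by_cases h : ∃ n, x ∈ Ioo (σ n) (σ (n+1))
  · obtain ⟨n, hn⟩ := h
    exact Or.inr ⟨n, hn, Kp_eval hmono hn⟩
  · push_neg at h
    exact Or.inl (Kp_zero h)

lemma Kp_meas {p : ℝ} {σ : ℕ → ℝ} (hmono : StrictMono σ) : Measurable (Kp p σ) := by
  have hterm : ∀ n : ℕ, Measurable fun x =>
      (Ioo (σ n) (σ (n+1))).indicator (fun y => Real.sin (p / 2 * π * (y - n)) / (π * y)) x := by
    intro n
    apply Measurable.indicator ?_ measurableSet_Ioo
    fun_prop
  apply measurable_of_tendsto_metrizable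
    (f := fun N x => ∑ n ∈ Finset.range N,
      (Ioo (σ n) (σ (n+1))).indicator (fun y => Real.sin (p / 2 * π * (y - n)) / (π * y)) x)
    (fun N => Finset.measurable_sum _ (fun n _ => hterm n))
  rw [tendsto_pi_nhds]
  intro x
  have hsummable : Summable fun n =>
      (Ioo (σ n) (σ (n+1))).indicator (fun y => Real.sin (p / 2 * π * (y - n)) / (π * y)) x := by
    by_cases h : ∃ n, x ∈ Ioo (σ n) (σ (n+1))
    · obtain ⟨n0, hn0⟩ := h
      apply summable_of_ne_finset_zero (s := {n0})
      intro m hm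
      simp only [Finset.mem_singleton] at hm
      exact Set.indicator_of_notMem (Ioo_disj hmono hn0 hm) _
    · push_neg at h
      apply summable_of_ne_finset_zero (s := (∅ : Finset ℕ))
      intro m _
      exact Set.indicator_of_notMem (h m) _
  exact hsummable.hasSum.tendsto_sum_nat

lemma abs_sin_le_of_nonneg {t : ℝ} (ht : 0 ≤ t) : |Real.sin t| ≤ t := by
  rcases le_or_gt 1 t with h | h
  · calc |Real.sin t| ≤ 1 := Real.abs_sin_le_one t
      _ ≤ t := h
  · have h0 : 0 ≤ Real.sin t :=
      Real.sin_nonneg_of_nonneg_of_le_pi ht (by linarith [Real.pi_gt_three])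
    rw [abs_of_nonneg h0]
    exact Real.sin_le ht

lemma int_inv_sq (C : ℝ) : IntegrableOn (fun y : ℝ => C/(π*y)^2) (Ioi (1:ℝ)) := by
  have hπ := Real.pi_pos
  have hg0 : IntegrableOn (fun x : ℝ => x ^ (-2 : ℝ)) (Ioi 1) :=
    integrableOn_Ioi_rpow_of_lt (by norm_num) one_pos
  have h1 : IntegrableOn (fun x : ℝ => (C/π^2) * x ^ (-2:ℝ)) (Ioi 1) := hg0.const_mul _
  apply h1.congr_fun ?_ measurableSet_Ioi
  intro x hx
  have hx0 : (0:ℝ) < x := lt_trans one_pos hx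
  simp only
  rw [show (-2:ℝ) = -((2:ℕ):ℝ) by norm_num, Real.rpow_neg hx0.le, Real.rpow_natCast]
  rw [mul_pow]
  ring

lemma tset_top {δ₁ δ₂ : ℝ} (hδ2 : 0 < δ₂) {σ : ℕ → ℝ} (hσ : σ ∈ Tset δ₁ δ₂) :
    ∀ y : ℝ, ∃ N, y < σ N := by
  obtain ⟨h0, hmono, h1, hgap⟩ := hσ
  have key : ∀ n : ℕ, δ₁ + n * δ₂ ≤ σ (n+1) := by
    intro n
    induction n with
    | zero => simpa using h1
    | succ m ih =>
        have h2 := hgap (m+1) (Nat.le_add_left 1 m)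
        push_cast at ih ⊢
        linarith
  intro y
  obtain ⟨n, hn⟩ := exists_nat_gt ((y - δ₁)/δ₂)
  refine ⟨n+1, ?_⟩
  rw [div_lt_iff₀ hδ2] at hn
  have := key n
  linarith

lemma exists_index {σ : ℕ → ℝ} (h0 : σ 0 = 0) (htop : ∀ y : ℝ, ∃ N, y < σ N)
    {x : ℝ} (hx : 0 < x) (hnr : x ∉ Set.range σ) : ∃ n, x ∈ Ioo (σ n) (σ (n+1)) := by
  have hex : ∃ N, x < σ N := htop x
  have hN : x < σ (Nat.find hex) := Nat.find_spec hex
  have hN0 : Nat.find hex ≠ 0 := by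
    intro h
    rw [h, h0] at hN
    linarith
  obtain ⟨n, hn⟩ := Nat.exists_eq_succ_of_ne_zero hN0
  refine ⟨n, ?_, ?_⟩
  · have hmin : ¬ x < σ n := Nat.find_min hex (by omega)
    push_neg at hmin
    rcases hmin.lt_or_eq with h | h
    · exact h
    · exact absurd ⟨n, h⟩ hnr
  · have h2 : n + 1 = Nat.find hex := by omega
    rw [h2]
    exact hN

lemma F_integrable {p δ₁ δ₂ : ℝ} (hp0 : 0 < p) (hδ1 : 0 < δ₁) {σ : ℕ → ℝ}
    (hσ : σ ∈ Tset δ₁ δ₂) :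
    IntegrableOn (fun x => (max 0 (Kp p σ x)) ^ 2) (Ioi (0:ℝ)) := by
  have hπ := Real.pi_pos
  obtain ⟨h0, hmono, h1, hgap⟩ := hσ
  have hmeas : Measurable fun x => (max 0 (Kp p σ x)) ^ 2 :=
    (measurable_const.max (Kp_meas hmono)).pow_const 2
  have habs : ∀ {x B : ℝ}, |Kp p σ x| ≤ B → (max 0 (Kp p σ x))^2 ≤ B^2 := by
    intro x B h
    have h0' : 0 ≤ max 0 (Kp p σ x) := le_max_left _ _
    have h1' : max 0 (Kp p σ x) ≤ B := max_le (le_trans (abs_nonneg _) h) (le_trans (le_abs_self _) h)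
    exact pow_le_pow_left₀ h0' h1' 2
  have hint1 : IntegrableOn (fun x => (max 0 (Kp p σ x)) ^ 2) (Ioc (0:ℝ) 1) := by
    apply Measure.integrableOn_of_bounded (μ := volume) (s := Ioc (0:ℝ) 1)
      (M := (max (p/2) (1/(π*δ₁)))^2) measure_Ioc_lt_top.ne hmeas.aestronglyMeasurable ?_
    rw [ae_restrict_iff' measurableSet_Ioc]
    filter_upwards with x hx
    have hx0 : 0 < x := hx.1
    have hπx : 0 < π * x := by positivity
    have hKb : |Kp p σ x| ≤ max (p/2) (1/(π*δ₁)) := by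
      rcases Kp_cases hmono x with h | ⟨n, hn, heq⟩
      · rw [h, abs_zero]
        positivity
      · rw [heq, abs_div, abs_of_pos hπx]
        rcases Nat.eq_zero_or_pos n with rfl | hn1
        · have harg : p / 2 * π * (x - (0:ℕ)) = p/2*π*x := by push_cast; ring
          rw [harg]
          have hsin : |Real.sin (p/2*π*x)| ≤ p/2*π*x := abs_sin_le_of_nonneg (by positivity)
          calc |Real.sin (p/2*π*x)| / (π*x) ≤ (p/2*π*x)/(π*x) :=
                (div_le_div_iff_of_pos_right hπx).mpr hsin
            _ = p/2 := by field_simp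
            _ ≤ _ := le_max_left _ _
        · have hδx : δ₁ < x := by
            have hx1 : δ₁ ≤ σ n := le_trans h1 (hmono.monotone hn1)
            linarith [hn.1]
          have hπδ : 0 < π * δ₁ := by positivity
          calc |Real.sin (p / 2 * π * (x - n))| / (π*x) ≤ 1/(π*x) :=
                (div_le_div_iff_of_pos_right hπx).mpr (Real.abs_sin_le_one _)
            _ ≤ 1/(π*δ₁) := by
                apply div_le_div_of_nonneg_left one_pos.le hπδ
                nlinarith
            _ ≤ _ := le_max_right _ _
    rw [Real.norm_eq_abs, abs_of_nonneg (sq_nonneg _)]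
    exact habs hKb
  have hint2 : IntegrableOn (fun x => (max 0 (Kp p σ x)) ^ 2) (Ioi (1:ℝ)) := by
    apply Integrable.mono (int_inv_sq 1) hmeas.aestronglyMeasurable
    rw [ae_restrict_iff' measurableSet_Ioi]
    filter_upwards with x hx
    have hx0 : (0:ℝ) < x := lt_trans one_pos hx
    have hπx : 0 < π * x := by positivity
    have hKb : |Kp p σ x| ≤ 1/(π*x) := by
      rcases Kp_cases hmono x with h | ⟨n, hn, heq⟩
      · rw [h, abs_zero]; positivity
      · rw [heq, abs_div, abs_of_pos hπx]
        exact (div_le_div_iff_of_pos_right hπx).mpr (Real.abs_sin_le_one _)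
    rw [Real.norm_eq_abs, abs_of_nonneg (sq_nonneg _), Real.norm_eq_abs]
    calc (max 0 (Kp p σ x))^2 ≤ (1/(π*x))^2 := habs hKb
      _ = 1/(π*x)^2 := by ring
      _ ≤ |1/(π*x)^2| := le_abs_self _
  rw [show Ioi (0:ℝ) = Ioc 0 1 ∪ Ioi 1 from (Ioc_union_Ioi_eq_Ioi zero_le_one).symm]
  exact hint1.union hint2

noncomputable def eS (p : ℝ) (τ : ℕ → ℝ) (k : ℕ) : ℝ → ℝ :=
  (Ioo ((↑(k+1):ℝ) - 1/2 + 3/p) (τ (k+1))).indicator (fun y => gS p (k+1) y - gS p k y)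

lemma eS_meas (p : ℝ) (τ : ℕ → ℝ) (k : ℕ) : Measurable (eS p τ k) :=
  ((gS_meas p (k+1)).sub (gS_meas p k)).indicator measurableSet_Ioo

lemma c_ge_one {p : ℝ} (hp4 : 4 ≤ p) (hp6 : p ≤ 6) (k : ℕ) :
    (1:ℝ) ≤ (↑(k+1):ℝ) - 1/2 + 3/p := by
  have hp0 : 0 < p := by linarith
  have h3p : 1/2 ≤ 3/p := by rw [le_div_iff₀ hp0]; linarith
  push_cast
  have : (0:ℝ) ≤ (k:ℝ) := Nat.cast_nonneg k
  linarith

lemma eS_int {p : ℝ} (hp4 : 4 ≤ p) (hp6 : p ≤ 6) (τ : ℕ → ℝ) (k : ℕ) :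
    Integrable (eS p τ k) volume := by
  have hπ := Real.pi_pos
  apply IntegrableOn.integrable_indicator ?_ measurableSet_Ioo
  apply Measure.integrableOn_of_bounded (μ := volume)
    (s := Ioo ((↑(k+1):ℝ) - 1/2 + 3/p) (τ (k+1))) (M := 2/π^2)
    measure_Ioo_lt_top.ne ((gS_meas p (k+1)).sub (gS_meas p k)).aestronglyMeasurable ?_
  rw [ae_restrict_iff' measurableSet_Ioo]
  filter_upwards with x hx
  have hx1 : (1:ℝ) ≤ x := le_trans (c_ge_one hp4 hp6 k) hx.1.le
  have hx0 : (0:ℝ) < x := by linarith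
  have hb1 := gS_le p (k+1) hx0
  have hb2 := gS_le p k hx0
  have hg1 := gS_nonneg p (k+1) x
  have hg2 := gS_nonneg p k x
  have hple : (1/(π*x))^2 ≤ 1/π^2 := by
    rw [show (1/(π*x))^2 = 1/(π^2*x^2) by ring]
    apply div_le_div_of_nonneg_left one_pos.le (by positivity)
    have hxx : (1:ℝ) ≤ x^2 := by nlinarith
    have := mul_le_mul_of_nonneg_left hxx (sq_nonneg π)
    linarith
  have hinv : (0:ℝ) ≤ 1/π^2 := by positivity
  have h2π : (2:ℝ)/π^2 = 2*(1/π^2) := by ring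
  rw [Real.norm_eq_abs, Pi.sub_apply, abs_le]
  refine ⟨by linarith, by linarith⟩

lemma eS_integral_nonneg {p : ℝ} (hp4 : 4 ≤ p) (hp6 : p ≤ 6) (τ : ℕ → ℝ) (k : ℕ) :
    0 ≤ ∫ x in Ioi (0:ℝ), eS p τ k x := by
  have hsub : Ioo ((↑(k+1):ℝ) - 1/2 + 3/p) (τ (k+1)) ⊆ Ioi (0:ℝ) := by
    intro y hy
    have := hy.1
    have := c_ge_one hp4 hp6 k
    exact mem_Ioi.mpr (by linarith)
  simp only [eS]
  rw [MeasureTheory.integral_indicator measurableSet_Ioo,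
    Measure.restrict_restrict measurableSet_Ioo,
    Set.inter_eq_self_of_subset_left hsub]
  exact lemA hp4 hp6 k (τ (k+1))
theorem stmt16 (p δ₁ δ₂ : ℝ) (hp4 : 4 ≤ p) (hp6 : p ≤ 6)
    (hδ1 : 0 < δ₁) (hδ1' : δ₁ ≤ 1 / 2 + 3 / p) (hδ2 : 0 < δ₂) (hδ2' : δ₂ ≤ 1)
    (τ : ℕ → ℝ) (hτ : τ ∈ Tset δ₁ δ₂)
    (γ : ℕ → ℝ) (hγ : ∀ n : ℕ, γ n = min ((n : ℝ) - 1 / 2 + 3 / p) (τ n)) :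
    γ ∈ Tset δ₁ δ₂ ∧ Ep p τ ≤ Ep p γ := by
  have hπ := Real.pi_pos
  have hp0 : 0 < p := by linarith
  have h3p : 1/2 ≤ 3/p := by rw [le_div_iff₀ hp0]; linarith
  have hτ' := hτ
  obtain ⟨hτ0, hτmono, hτ1, hτgap⟩ := hτ'
  have hγmono : StrictMono γ := by
    apply strictMono_nat_of_lt_succ
    intro n
    rw [hγ n, hγ (n+1)]
    apply lt_min
    · apply (min_le_left _ _).trans_lt
      push_cast
      linarith
    · exact (min_le_right _ _).trans_lt (hτmono (Nat.lt_succ_self n))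
  have hγ0 : γ 0 = 0 := by
    rw [hγ 0, hτ0]
    simp only [Nat.cast_zero]
    rw [min_eq_right]
    linarith
  have hγ1 : δ₁ ≤ γ 1 := by
    rw [hγ 1]
    push_cast
    exact le_min (by linarith) hτ1
  have hγgap : ∀ n, 1 ≤ n → δ₂ ≤ γ (n+1) - γ n := by
    intro n hn
    rw [hγ n, hγ (n+1)]
    have h2 := hτgap n hn
    have hA : min ((n:ℝ) - 1/2 + 3/p) (τ n) ≤ (n:ℝ) - 1/2 + 3/p := min_le_left _ _
    have hB : min ((n:ℝ) - 1/2 + 3/p) (τ n) ≤ τ n := min_le_right _ _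
    have hmin : min ((n:ℝ) - 1/2 + 3/p) (τ n) + δ₂
        ≤ min ((↑(n+1):ℝ) - 1/2 + 3/p) (τ (n+1)) := by
      apply le_min
      · push_cast
        linarith
      · linarith
    have : γ n = min ((n:ℝ) - 1/2 + 3/p) (τ n) := by rw [hγ n]
    linarith
  have hγT : γ ∈ Tset δ₁ δ₂ := ⟨hγ0, hγmono, hγ1, hγgap⟩
  refine ⟨hγT, ?_⟩
  have hγleτ : ∀ j, γ j ≤ τ j := fun j => by rw [hγ j]; exact min_le_right _ _
  have hτtop := tset_top hδ2 (⟨hτ0, hτmono, hτ1, hτgap⟩ : τ ∈ Tset δ₁ δ₂)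
  have hγtop := tset_top hδ2 hγT
  have hFτint : IntegrableOn (fun x => (max 0 (Kp p τ x)) ^ 2) (Ioi (0:ℝ)) :=
    F_integrable hp0 hδ1 (⟨hτ0, hτmono, hτ1, hτgap⟩ : τ ∈ Tset δ₁ δ₂)
  have hFγint : IntegrableOn (fun x => (max 0 (Kp p γ x)) ^ 2) (Ioi (0:ℝ)) :=
    F_integrable hp0 hδ1 hγT
  have hae : ∀ᵐ x ∂(volume.restrict (Ioi (0:ℝ))),
      0 < x ∧ x ∉ Set.range τ ∧ x ∉ Set.range γ := by
    have h1 : ∀ᵐ x ∂(volume.restrict (Ioi (0:ℝ))), x ∈ Ioi (0:ℝ) :=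
      ae_restrict_mem measurableSet_Ioi
    have h2 : ∀ᵐ (x:ℝ), x ∉ Set.range τ ∪ Set.range γ := by
      rw [← measure_eq_zero_iff_ae_notMem]
      exact ((Set.countable_range τ).union (Set.countable_range γ)).measure_zero _
    have h2' := ae_restrict_of_ae (s := Ioi (0:ℝ)) h2
    filter_upwards [h1, h2'] with x hx1 hx2
    exact ⟨hx1, fun h => hx2 (Or.inl h), fun h => hx2 (Or.inr h)⟩
  have hkey : ∀ᵐ x ∂(volume.restrict (Ioi (0:ℝ))),
      (∀ Nn : ℕ, |∑ k ∈ Finset.range Nn, eS p τ k x|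
        ≤ (Ioi (1:ℝ)).indicator (fun y => 2/(π*y)^2) x) ∧
      Filter.Tendsto (fun Nn => ∑ k ∈ Finset.range Nn, eS p τ k x) Filter.atTop
        (nhds ((max 0 (Kp p γ x)) ^ 2 - (max 0 (Kp p τ x)) ^ 2)) := by
    filter_upwards [hae] with x hx
    obtain ⟨hx0, hxτ, hxγ⟩ := hx
    obtain ⟨N, hN⟩ := exists_index hτ0 hτtop hx0 hxτ
    obtain ⟨M, hM⟩ := exists_index hγ0 hγtop hx0 hxγ
    have hNM : N ≤ M := by
      by_contra hcon
      push_neg at hcon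
      have h1 : τ (M+1) ≤ τ N := hτmono.monotone hcon
      have h2 := hγleτ (M+1)
      have h3 := hN.1
      have h4 := hM.2
      linarith
    have hiff : ∀ k : ℕ,
        x ∈ Ioo ((↑(k+1):ℝ) - 1/2 + 3/p) (τ (k+1)) ↔ (N < k+1 ∧ k+1 ≤ M) := by
      intro k
      constructor
      · rintro ⟨hck, hτk⟩
        constructor
        · by_contra hcon
          push_neg at hcon
          have h1 : τ (k+1) ≤ τ N := hτmono.monotone hcon
          have := hN.1
          linarith
        · by_contra hcon
          push_neg at hcon
          have h1 : γ (M+1) ≤ γ (k+1) := hγmono.monotone hcon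
          have h2 : γ (k+1) ≤ (↑(k+1):ℝ) - 1/2 + 3/p := by
            rw [hγ (k+1)]
            exact min_le_left _ _
          have := hM.2
          linarith
      · rintro ⟨hNk, hkM⟩
        have hτk : x < τ (k+1) := lt_of_lt_of_le hN.2 (hτmono.monotone hNk)
        have hγk : γ (k+1) < x := lt_of_le_of_lt (hγmono.monotone hkM) hM.1
        rw [hγ (k+1)] at hγk
        rcases min_lt_iff.mp hγk with h | h
        · exact ⟨h, hτk⟩
        · exact absurd hτk (not_lt.mpr h.le)
    have hsum : ∀ Nn : ℕ, (∑ k ∈ Finset.range Nn, eS p τ k x)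
        = gS p (max N (min Nn M)) x - gS p N x := by
      intro Nn
      have htel := Finset.sum_range_sub (f := fun j => gS p (max N (min j M)) x) Nn
      have hterm : ∀ k : ℕ, eS p τ k x
          = gS p (max N (min (k+1) M)) x - gS p (max N (min k M)) x := by
        intro k
        by_cases hk : x ∈ Ioo ((↑(k+1):ℝ) - 1/2 + 3/p) (τ (k+1))
        · obtain ⟨hNk, hkM⟩ := (hiff k).mp hk
          simp only [eS]
          rw [Set.indicator_of_mem hk]
          have e1 : max N (min (k+1) M) = k+1 := by omega
          have e2 : max N (min k M) = k := by omega
          rw [e1, e2]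
        · simp only [eS]
          rw [Set.indicator_of_notMem hk]
          have hnot : ¬(N < k+1 ∧ k+1 ≤ M) := fun h => hk ((hiff k).mpr h)
          have e1 : max N (min (k+1) M) = max N (min k M) := by
            rcases Nat.lt_or_ge N (k+1) with h1 | h1
            · have h2 : M < k+1 := by
                by_contra h3
                push_neg at h3
                exact hnot ⟨h1, h3⟩
              omega
            · omega
          rw [e1]
          ring
      have e0 : max N (min 0 M) = N := by omega
      calc (∑ k ∈ Finset.range Nn, eS p τ k x)
          = ∑ k ∈ Finset.range Nn,
              (gS p (max N (min (k+1) M)) x - gS p (max N (min k M)) x) :=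
            Finset.sum_congr rfl (fun k _ => hterm k)
        _ = gS p (max N (min Nn M)) x - gS p (max N (min 0 M)) x := htel
        _ = gS p (max N (min Nn M)) x - gS p N x := by rw [e0]
    constructor
    · intro Nn
      rw [hsum Nn]
      by_cases hKN : max N (min Nn M) = N
      · rw [hKN, sub_self, abs_zero]
        exact Set.indicator_nonneg (fun y _ => div_nonneg (by norm_num) (sq_nonneg _)) x
      · have hKgt : N < max N (min Nn M) := lt_of_le_of_ne (le_max_left _ _) (Ne.symm hKN)
        have hx' : x ∈ Ioo ((↑(N+1):ℝ) - 1/2 + 3/p) (τ (N+1)) :=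
          (hiff N).mpr ⟨Nat.lt_succ_self N, by omega⟩
        have hx1 : (1:ℝ) < x := by
          have h1 := hx'.1
          have h2 := c_ge_one hp4 hp6 N
          linarith
        rw [Set.indicator_of_mem (mem_Ioi.mpr hx1)]
        have hb1 := gS_le p (max N (min Nn M)) hx0
        have hb2 := gS_le p N hx0
        have hg1 := gS_nonneg p (max N (min Nn M)) x
        have hg2 := gS_nonneg p N x
        have hsq : (0:ℝ) ≤ (1/(π*x))^2 := sq_nonneg _
        have heq2 : (2:ℝ)/(π*x)^2 = 2*(1/(π*x))^2 := by ring
        rw [abs_le]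
        exact ⟨by linarith, by linarith⟩
    · have hFγ : (max 0 (Kp p γ x)) ^ 2 = gS p M x := by
        rw [Kp_eval hγmono hM]
        rfl
      have hFτ : (max 0 (Kp p τ x)) ^ 2 = gS p N x := by
        rw [Kp_eval hτmono hN]
        rfl
      rw [hFγ, hFτ]
      apply tendsto_atTop_of_eventually_const (i₀ := M)
      intro Nn hNn
      rw [hsum Nn]
      have : max N (min Nn M) = M := by omega
      rw [this]
  have hBint : Integrable ((Ioi (1:ℝ)).indicator (fun y => 2/(π*y)^2))
      (volume.restrict (Ioi (0:ℝ))) :=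
    ((int_inv_sq 2).integrable_indicator measurableSet_Ioi).integrableOn
  have htendall := tendsto_integral_of_dominated_convergence
    (F := fun Nn x => ∑ k ∈ Finset.range Nn, eS p τ k x)
    (f := fun x => (max 0 (Kp p γ x)) ^ 2 - (max 0 (Kp p τ x)) ^ 2)
    (bound := (Ioi (1:ℝ)).indicator (fun y => 2/(π*y)^2))
    (fun Nn => (Finset.measurable_sum _ (fun k _ => eS_meas p τ k)).aestronglyMeasurable)
    hBint
    (fun Nn => hkey.mono (fun x hx => by rw [Real.norm_eq_abs]; exact hx.1 Nn))
    (hkey.mono (fun x hx => hx.2))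
  have hnonneg : ∀ Nn : ℕ, 0 ≤ ∫ x in Ioi (0:ℝ), ∑ k ∈ Finset.range Nn, eS p τ k x := by
    intro Nn
    rw [MeasureTheory.integral_finset_sum _ (fun k _ => (eS_int hp4 hp6 τ k).integrableOn)]
    exact Finset.sum_nonneg (fun k _ => eS_integral_nonneg hp4 hp6 τ k)
  have hlim : 0 ≤ ∫ x in Ioi (0:ℝ),
      ((max 0 (Kp p γ x)) ^ 2 - (max 0 (Kp p τ x)) ^ 2) :=
    ge_of_tendsto' htendall hnonneg
  rw [MeasureTheory.integral_sub hFγint hFτint] at hlim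
  simp only [Ep]
  linarith
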